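/- Let F : (0,∞) → ℝ be differentiable with σ_F(x) := sup_{y ≥ x} |F(y)| finite for all x > 0 and |F'| integrable; set σ_{1F}(x) := ∫_x^∞ σ_F(y) dy, σ_{2F}(x) := ∫_x^∞ |F'(y)| dy. Let 0 ≤ δ < 1 and x ≥ 0 with σ_{1F}(2x) ≤ δ. Suppose A(x,·) is bounded and satisfies the Marchenko equation for y ≥ x with sup_{y≥x}|A(x,y)| ≤ σ_F(2x)/(1−δ), a function A_x(x,·) satisfies ∫_x^∞ |A_x(x,s)| ds ≤ (1−δ)^{-1}[σ_{2F}(2x) + (1−δ)^{-1} σ_F(2x) σ_{1F}(2x)], and the diagonal derivative identity Ȧ(x,x) = −2F'(2x) + A(x,x)F(2x) − ∫_x^∞ A_x(x,s) F(x+s) ds − ∫_x^∞ A(x,s) F'(s+x) ds holds, where Ȧ(x,x) := d/dx [A(x,x)]. Then there is a constant c > 0 depending only on δ such that |Ȧ(x,x)| ≤ 2|F'(2x)| + c σ_F(2x)² + c σ_F(2x) σ_{2F}(2x) + c σ_{1F}(2x) σ_F(2x)². -/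

import Mathlib

open MeasureTheory Set Filter

lemma marchenko_aux_bddAbove (F F' : ℝ → ℝ)
    (hF' : ∀ y > (0:ℝ), HasDerivAt F (F' y) y)
    (hFbdd : ∀ x' > (0:ℝ), BddAbove ((fun y => |F y|) '' Set.Ici x'))
    (hF'int : IntegrableOn (fun y => |F' y|) (Set.Ioi 0)) :
    BddAbove ((fun y => |F y|) '' Set.Ici (0:ℝ)) := by
  have hderiv_eq : ∀ y ∈ Set.Ioi (0:ℝ), deriv F y = F' y := fun y hy => (hF' y hy).deriv
  have hF'sm : AEStronglyMeasurable F' (volume.restrict (Set.Ioi (0:ℝ))) := by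
    refine (measurable_deriv F).aestronglyMeasurable.congr ?_
    exact (ae_restrict_iff' measurableSet_Ioi).2 (ae_of_all _ hderiv_eq)
  have hF'int' : IntegrableOn F' (Set.Ioi (0:ℝ)) := by
    exact (integrable_norm_iff hF'sm).1 (by have h : IntegrableOn (fun y => ‖F' y‖) (Set.Ioi (0:ℝ)) := hF'int.congr_fun (fun y _ => (Real.norm_eq_abs _).symm) measurableSet_Ioi; exact h)
  set M1 := sSup ((fun y => |F y|) '' Set.Ici (1:ℝ)) with hM1
  set C := max (max (|F 0|) M1) (|F 1| + ∫ y in Set.Ioi (0:ℝ), |F' y|) with hC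
  refine ⟨C, ?_⟩
  rintro b ⟨y, hy, rfl⟩
  simp only
  rcases le_or_gt 1 y with h1 | h1
  · exact le_trans (le_csSup (hFbdd 1 one_pos) ⟨y, h1, rfl⟩)
      (le_max_of_le_left (le_max_right _ _))
  rcases eq_or_lt_of_le (show (0:ℝ) ≤ y from hy) with h0 | h0
  · rw [← h0]
    exact le_max_of_le_left (le_max_left _ _)
  · have hIcc : ∀ t ∈ Set.uIcc y 1, HasDerivAt F (F' t) t := by
      intro t ht
      rw [Set.uIcc_of_le h1.le] at ht
      exact hF' t (lt_of_lt_of_le h0 ht.1)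
    have hii : IntervalIntegrable F' volume y 1 := by
      rw [intervalIntegrable_iff_integrableOn_Ioc_of_le h1.le]
      exact hF'int'.mono_set (fun t ht => lt_trans h0 ht.1)
    have hFTC := intervalIntegral.integral_eq_sub_of_hasDerivAt hIcc hii
    have hFy : F y = F 1 - ∫ t in y..1, F' t := by rw [hFTC]; ring
    have habs : |∫ t in y..1, F' t| ≤ ∫ t in y..1, |F' t| :=
      intervalIntegral.abs_integral_le_integral_abs h1.le
    have hsub : (∫ t in y..1, |F' t|) ≤ ∫ t in Set.Ioi (0:ℝ), |F' t| := by
      rw [intervalIntegral.integral_of_le h1.le]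
      refine setIntegral_mono_set hF'int (ae_of_all _ fun t => abs_nonneg _) ?_
      exact HasSubset.Subset.eventuallyLE (fun t ht => lt_trans h0 ht.1)
    have : |F y| ≤ |F 1| + ∫ t in Set.Ioi (0:ℝ), |F' t| := by
      rw [hFy]
      calc |F 1 - ∫ t in y..1, F' t| ≤ |F 1| + |∫ t in y..1, F' t| := abs_sub _ _
        _ ≤ _ := by linarith
    exact le_trans this (le_max_right _ _)

/-- `σ_F(x) := sup_{y ≥ x} |F(y)|`. -/
noncomputable def sigmaF (F : ℝ → ℝ) (x : ℝ) : ℝ :=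
  sSup ((fun y => |F y|) '' Set.Ici x)

/-- bound on the diagonal derivative `Ȧ(x,x)` of the Marchenko kernel:
there is a constant `c > 0` depending only on `δ` such that
`|Ȧ(x,x)| ≤ 2|F'(2x)| + c σ_F(2x)² + c σ_F(2x) σ_{2F}(2x) + c σ_{1F}(2x) σ_F(2x)²`. -/
theorem marchenko_diagonal_derivative_bound
    (δ : ℝ) (hδ0 : 0 ≤ δ) (hδ1 : δ < 1) :
    ∃ c > (0 : ℝ), ∀ (F F' A Ax : ℝ → ℝ) (x : ℝ) (Adot : ℝ),
      (∀ y > (0 : ℝ), HasDerivAt F (F' y) y) →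
      Measurable F →
      (∀ x' > (0 : ℝ), BddAbove ((fun y => |F y|) '' Set.Ici x')) →
      IntegrableOn (fun y => |F' y|) (Set.Ioi 0) →
      0 ≤ x →
      IntegrableOn (sigmaF F) (Set.Ioi (2 * x)) →
      (∫ y in Set.Ioi (2 * x), sigmaF F y) ≤ δ →
      Measurable A →
      BddAbove ((fun y => |A y|) '' Set.Ici x) →
      (∀ y ≥ x, A y + ∫ t in Set.Ioi x, A t * F (t + y) = -F (x + y)) →
      sSup ((fun y => |A y|) '' Set.Ici x) ≤ sigmaF F (2 * x) / (1 - δ) →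
      IntegrableOn Ax (Set.Ioi x) →
      (∫ s in Set.Ioi x, |Ax s|) ≤
        (1 - δ)⁻¹ * ((∫ y in Set.Ioi (2 * x), |F' y|) +
          (1 - δ)⁻¹ * sigmaF F (2 * x) * (∫ y in Set.Ioi (2 * x), sigmaF F y)) →
      (Adot = -2 * F' (2 * x) + A x * F (2 * x)
        - (∫ s in Set.Ioi x, Ax s * F (x + s))
        - (∫ s in Set.Ioi x, A s * F' (s + x))) →
      |Adot| ≤ 2 * |F' (2 * x)| + c * (sigmaF F (2 * x)) ^ 2
        + c * sigmaF F (2 * x) * (∫ y in Set.Ioi (2 * x), |F' y|)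
        + c * (∫ y in Set.Ioi (2 * x), sigmaF F y) * (sigmaF F (2 * x)) ^ 2 := by
  have hd : (0:ℝ) < 1 - δ := by linarith
  set e := (1 - δ)⁻¹ with he
  have he0 : 0 < e := inv_pos.2 hd
  have hemul : e * (1 - δ) = 1 := inv_mul_cancel₀ hd.ne'
  have he1 : 1 ≤ e := by nlinarith
  refine ⟨2 * e ^ 2, by positivity, ?_⟩
  intro F F' A Ax x Adot hF' hFmeas hFbdd hF'int hx hσint hσδ hAmeas hAbdd hMarch
    hAsup hAxint hAxbound hAdot
  set s := sigmaF F (2 * x) with hs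
  set S1 := ∫ y in Set.Ioi (2 * x), sigmaF F y with hS1
  set S2 := ∫ y in Set.Ioi (2 * x), |F' y| with hS2
  -- boundedness of |F| on Ici (2x)
  have hB : BddAbove ((fun y => |F y|) '' Set.Ici (2 * x)) := by
    rcases eq_or_lt_of_le hx with h0 | h0
    · rw [← h0, mul_zero]
      exact marchenko_aux_bddAbove F F' hF' hFbdd hF'int
    · exact hFbdd (2 * x) (by linarith)
  have hFle : ∀ y ∈ Set.Ici (2 * x), |F y| ≤ s := fun y hy => le_csSup hB ⟨y, hy, rfl⟩
  set M := sSup ((fun y => |A y|) '' Set.Ici x) with hM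
  have hAle : ∀ y ∈ Set.Ici x, |A y| ≤ M := fun y hy => le_csSup hAbdd ⟨y, hy, rfl⟩
  have hMs : M ≤ s * e := by rw [he, ← div_eq_mul_inv]; exact hAsup
  have hs0 : 0 ≤ s := Real.sSup_nonneg (by rintro b ⟨y, _, rfl⟩; exact abs_nonneg _)
  have hS1n : 0 ≤ S1 := integral_nonneg fun y =>
    Real.sSup_nonneg (by rintro b ⟨z, _, rfl⟩; exact abs_nonneg _)
  have hS2n : 0 ≤ S2 := integral_nonneg fun y => abs_nonneg _
  have hM0 : 0 ≤ M := le_trans (abs_nonneg _) (hAle x Set.self_mem_Ici)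
  -- first term
  have hT1 : |A x * F (2 * x)| ≤ (s * e) * s := by
    rw [abs_mul]
    exact mul_le_mul (le_trans (hAle x Set.self_mem_Ici) hMs) (hFle _ Set.self_mem_Ici) (abs_nonneg _)
      (by positivity)
  -- I1 bound
  have hI1 : |∫ t in Set.Ioi x, Ax t * F (x + t)| ≤ (e * (S2 + e * s * S1)) * s := by
    have hg : Integrable (fun t => |Ax t| * s) (volume.restrict (Set.Ioi x)) :=
      hAxint.abs.mul_const s
    have hbd : ∀ᵐ t ∂(volume.restrict (Set.Ioi x)), ‖Ax t * F (x + t)‖ ≤ |Ax t| * s := by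
      refine (ae_restrict_iff' measurableSet_Ioi).2 (ae_of_all _ fun t ht => ?_)
      rw [Real.norm_eq_abs, abs_mul]
      refine mul_le_mul_of_nonneg_left (hFle _ ?_) (abs_nonneg _)
      simp only [Set.mem_Ici]
      have : x < t := ht
      linarith
    calc |∫ t in Set.Ioi x, Ax t * F (x + t)|
        ≤ ∫ t in Set.Ioi x, |Ax t| * s := by
          simpa [Real.norm_eq_abs] using norm_integral_le_of_norm_le hg hbd
      _ = (∫ t in Set.Ioi x, |Ax t|) * s := by rw [integral_mul_const]
      _ ≤ (e * (S2 + e * s * S1)) * s := by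
          refine mul_le_mul_of_nonneg_right ?_ hs0
          simpa [he, hS1, hS2] using hAxbound
  -- translation facts
  have hpre : (fun t : ℝ => t + x) ⁻¹' Set.Ioi (2 * x) = Set.Ioi x := by
    ext t
    simp only [Set.mem_preimage, Set.mem_Ioi]
    constructor <;> intro h <;> linarith
  have hmp : MeasurePreserving (fun t : ℝ => t + x) volume volume :=
    measurePreserving_add_right volume x
  have hemb : MeasurableEmbedding (fun t : ℝ => t + x) :=
    (MeasurableEquiv.addRight x).measurableEmbedding
  have hF'int2 : IntegrableOn (fun y => |F' y|) (Set.Ioi (2 * x)) :=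
    hF'int.mono_set (Set.Ioi_subset_Ioi (by linarith))
  have htransInt : IntegrableOn (fun t => |F' (t + x)|) (Set.Ioi x) := by
    have h := hmp.integrableOn_comp_preimage hemb
      (f := fun y => |F' y|) (s := Set.Ioi (2 * x))
    rw [hpre] at h
    exact h.2 hF'int2
  have htransEq : (∫ t in Set.Ioi x, |F' (t + x)|) = S2 := by
    have h := hmp.setIntegral_preimage_emb hemb (fun y => |F' y|) (Set.Ioi (2 * x))
    rw [hpre] at h
    exact h
  -- I2 bound
  have hI2 : |∫ t in Set.Ioi x, A t * F' (t + x)| ≤ (s * e) * S2 := by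
    have hg : Integrable (fun t => M * |F' (t + x)|) (volume.restrict (Set.Ioi x)) :=
      htransInt.const_mul M
    have hbd : ∀ᵐ t ∂(volume.restrict (Set.Ioi x)), ‖A t * F' (t + x)‖ ≤ M * |F' (t + x)| := by
      refine (ae_restrict_iff' measurableSet_Ioi).2 (ae_of_all _ fun t ht => ?_)
      rw [Real.norm_eq_abs, abs_mul]
      exact mul_le_mul_of_nonneg_right (hAle t (Set.mem_Ici.2 (le_of_lt (Set.mem_Ioi.1 ht)))) (abs_nonneg _)
    calc |∫ t in Set.Ioi x, A t * F' (t + x)|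
        ≤ ∫ t in Set.Ioi x, M * |F' (t + x)| := by
          simpa [Real.norm_eq_abs] using norm_integral_le_of_norm_le hg hbd
      _ = M * S2 := by rw [integral_const_mul, htransEq]
      _ ≤ (s * e) * S2 := mul_le_mul_of_nonneg_right hMs hS2n
  -- combine
  have htri : |Adot| ≤ 2 * |F' (2 * x)| + |A x * F (2 * x)|
      + |∫ t in Set.Ioi x, Ax t * F (x + t)| + |∫ t in Set.Ioi x, A t * F' (t + x)| := by
    rw [hAdot]
    have h1 : |(-2 * F' (2 * x) + A x * F (2 * x)
        - (∫ t in Set.Ioi x, Ax t * F (x + t))) - (∫ t in Set.Ioi x, A t * F' (t + x))|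
        ≤ |(-2 * F' (2 * x) + A x * F (2 * x)) - (∫ t in Set.Ioi x, Ax t * F (x + t))|
          + |∫ t in Set.Ioi x, A t * F' (t + x)| := abs_sub _ _
    have h2 : |(-2 * F' (2 * x) + A x * F (2 * x)) - (∫ t in Set.Ioi x, Ax t * F (x + t))|
        ≤ |(-2 * F' (2 * x) + A x * F (2 * x))| + |∫ t in Set.Ioi x, Ax t * F (x + t)| :=
      abs_sub _ _
    have h3 : |(-2 * F' (2 * x) + A x * F (2 * x))| ≤ 2 * |F' (2 * x)| + |A x * F (2 * x)| := by
      calc _ ≤ |(-2 * F' (2 * x))| + |A x * F (2 * x)| := abs_add_le _ _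
        _ = 2 * |F' (2 * x)| + |A x * F (2 * x)| := by rw [abs_mul, abs_neg, abs_two]
    linarith
  have hfin : |Adot| ≤ 2 * |F' (2 * x)| + (s * e) * s + (e * (S2 + e * s * S1)) * s
      + (s * e) * S2 := by linarith
  refine le_trans hfin ?_
  clear_value s S1 S2 e M
  have hee : e ≤ e ^ 2 := by nlinarith
  have hee2 : e ≤ 2 * e ^ 2 := by nlinarith
  have h1 : e * (s * s) ≤ 2 * e ^ 2 * (s * s) :=
    mul_le_mul_of_nonneg_right hee2 (mul_nonneg hs0 hs0)
  have h2 : e * (s * S2) ≤ e ^ 2 * (s * S2) :=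
    mul_le_mul_of_nonneg_right hee (mul_nonneg hs0 hS2n)
  have h3 : e ^ 2 * (S1 * (s * s)) ≤ 2 * e ^ 2 * (S1 * (s * s)) := by
    nlinarith [mul_nonneg hS1n (mul_nonneg hs0 hs0), sq_nonneg e]
  have hmain : s * e * s + e * (S2 + e * s * S1) * s + s * e * S2
      ≤ 2 * e ^ 2 * s ^ 2 + 2 * e ^ 2 * s * S2 + 2 * e ^ 2 * S1 * s ^ 2 := by
    linarith [h1, h2, h3]
  linarith
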